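/- Let X be a set equipped with a well-quasi-ordering ≤ and let D ⊆ X be downwards-closed. Then the set Idl(D) of ideals of X that are contained in D and are maximal with respect to inclusion among ideals contained in D is finite, and D is the union of the ideals in Idl(D). -/

import Mathlib

/-- A quasi-ordered set is a well-quasi-ordering if every infinite sequence
contains an increasing pair. -/
def IsWqo (X : Type*) [Preorder X] : Prop :=
  ∀ f : ℕ → X, ∃ i j : ℕ, i < j ∧ f i ≤ f j

/-- A subset is downwards-closed if it is closed under going down. -/
def DownwardsClosed {X : Type*} [Preorder X] (D : Set X) : Prop :=
  ∀ ⦃x y : X⦄, x ≤ y → y ∈ D → x ∈ D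

/-- An ideal is a nonempty, directed, downwards-closed subset. -/
def IsIdeal {X : Type*} [Preorder X] (I : Set X) : Prop :=
  I.Nonempty ∧ DownwardsClosed I ∧
    ∀ ⦃x⦄, x ∈ I → ∀ ⦃y⦄, y ∈ I → ∃ z ∈ I, x ≤ z ∧ y ≤ z

/-- The ideal decomposition of `D`: the ideals included in `D` that are maximal
with respect to inclusion among ideals included in `D`. -/
def idealDecomp {X : Type*} [Preorder X] (D : Set X) : Set (Set X) :=
  {I | IsIdeal I ∧ I ⊆ D ∧ ∀ J : Set X, IsIdeal J → J ⊆ D → I ⊆ J → I = J}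

section Aux

variable {X : Type*} [Preorder X]

/-- From wqo: the relation "strictly included and downwards-closed" is well-founded. -/
lemma wf_ssubset_dc (hX : IsWqo X) :
    WellFounded (fun A B : Set X => DownwardsClosed A ∧ A ⊂ B) := by
  haveI : IsIrrefl (Set X) (fun A B : Set X => DownwardsClosed A ∧ A ⊂ B) :=
    ⟨fun A h => lt_irrefl A h.2⟩
  haveI : IsTrans (Set X) (fun A B : Set X => DownwardsClosed A ∧ A ⊂ B) :=
    ⟨fun A B C h1 h2 => ⟨h1.1, h1.2.trans h2.2⟩⟩
  haveI : IsStrictOrder (Set X) (fun A B : Set X => DownwardsClosed A ∧ A ⊂ B) := ⟨⟩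
  rw [RelEmbedding.wellFounded_iff_isEmpty]
  constructor
  intro e
  have hrel : ∀ n : ℕ, DownwardsClosed (e (n + 1)) ∧ e (n + 1) ⊂ e n :=
    fun n => e.map_rel_iff.2 (Nat.lt_succ_self n)
  have hchoice : ∀ n : ℕ, ∃ x : X, x ∈ e n ∧ x ∉ e (n + 1) := by
    intro n
    obtain ⟨x, hx1, hx2⟩ := Set.exists_of_ssubset (hrel n).2
    exact ⟨x, hx1, hx2⟩
  choose f hf1 hf2 using hchoice
  obtain ⟨i, j, hij, hle⟩ := hX f
  have hsub : ∀ k, i + 1 ≤ k → e k ⊆ e (i + 1) := by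
    intro k hk
    induction k with
    | zero => omega
    | succ m ih =>
      rcases Nat.lt_or_ge (i + 1) (m + 1) with h | h
      · exact ((hrel m).2.subset).trans (ih (by omega))
      · have : i + 1 = m + 1 := by omega
        rw [this]
    
  have : f i ∈ e (i + 1) := (hrel i).1 hle (hsub j hij (hf1 j))
  exact hf2 i this

/-- A directed nonempty set has upper bounds for its finite subsets. -/
lemma ideal_finset_ub {I : Set X} (hI : IsIdeal I) :
    ∀ s : Finset X, ↑s ⊆ I → ∃ z ∈ I, ∀ x ∈ s, x ≤ z := by
  classical
  intro s
  induction s using Finset.induction with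
  | empty =>
    intro _
    obtain ⟨z, hz⟩ := hI.1
    exact ⟨z, hz, by simp⟩
  | insert a s' hx ih =>
    intro hs
    have hs' : ↑s' ⊆ I := by
      intro x hxs; exact hs (by simp [hxs])
    obtain ⟨z, hzI, hz⟩ := ih hs'
    have haI : a ∈ I := hs (by simp)
    obtain ⟨w, hwI, haw, hzw⟩ := hI.2.2 haI hzI
    refine ⟨w, hwI, ?_⟩
    intro x hxs
    rcases Finset.mem_insert.1 hxs with rfl | hxs'
    · exact haw
    · exact (hz x hxs').trans hzw

/-- An ideal contained in a finite union of downwards-closed sets is contained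
in one of them. -/
lemma ideal_subset_of_subset_union {I : Set X} (hI : IsIdeal I)
    (S : Finset (Set X)) (hS : ∀ A ∈ S, DownwardsClosed A)
    (hIS : I ⊆ ⋃₀ ↑S) : ∃ A ∈ S, I ⊆ A := by
  by_contra hcon
  push_neg at hcon
  have hchoice : ∀ A : Set X, A ∈ S → ∃ x, x ∈ I ∧ x ∉ A := by
    intro A hA
    obtain ⟨x, hx1, hx2⟩ := Set.not_subset.1 (hcon A hA)
    exact ⟨x, hx1, hx2⟩
  classical
  choose g hg1 hg2 using hchoice
  set t : Finset X := S.attach.image (fun A => g A.1 A.2) with ht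
  have htI : ↑t ⊆ I := by
    intro x hx
    simp only [ht, Finset.coe_image, Set.mem_image, Finset.mem_coe,
      Finset.mem_attach] at hx
    obtain ⟨A, _, rfl⟩ := hx
    exact hg1 _ _
  obtain ⟨z, hzI, hz⟩ := ideal_finset_ub hI t htI
  obtain ⟨A, hAS, hzA⟩ := hIS hzI
  have hAS' : A ∈ S := hAS
  have hgA : g A hAS' ∈ A :=
    hS A hAS' (hz _ (Finset.mem_image.2 ⟨⟨A, hAS'⟩, Finset.mem_attach _ _, rfl⟩)) hzA
  exact hg2 A hAS' hgA

/-- Every downwards-closed subset of a wqo is a finite union of ideals. -/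
lemma exists_finite_ideal_decomp (hX : IsWqo X) (D : Set X) (hD : DownwardsClosed D) :
    ∃ S : Finset (Set X), (∀ I ∈ S, IsIdeal I ∧ I ⊆ D) ∧ D = ⋃₀ ↑S := by
  classical
  induction D using (wf_ssubset_dc hX).induction with
  | _ D ih =>
  rcases Set.eq_empty_or_nonempty D with rfl | hne
  · exact ⟨∅, by simp, by simp⟩
  by_cases hdir : ∀ ⦃x⦄, x ∈ D → ∀ ⦃y⦄, y ∈ D → ∃ z ∈ D, x ≤ z ∧ y ≤ z
  · refine ⟨{D}, ?_, by simp⟩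
    intro I hI
    simp only [Finset.mem_singleton] at hI
    subst hI
    exact ⟨⟨hne, hD, hdir⟩, le_refl _⟩
  · push_neg at hdir
    obtain ⟨a, ha, b, hb, hab⟩ := hdir
    set D₁ : Set X := {x ∈ D | ¬ a ≤ x} with hD₁
    set D₂ : Set X := {x ∈ D | ¬ b ≤ x} with hD₂
    have hdc₁ : DownwardsClosed D₁ := by
      intro x y hxy hy
      exact ⟨hD hxy hy.1, fun h => hy.2 (h.trans hxy)⟩
    have hdc₂ : DownwardsClosed D₂ := by
      intro x y hxy hy
      exact ⟨hD hxy hy.1, fun h => hy.2 (h.trans hxy)⟩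
    have hss₁ : D₁ ⊂ D := by
      refine ⟨fun x hx => hx.1, fun h => ?_⟩
      exact (h ha).2 le_rfl
    have hss₂ : D₂ ⊂ D := by
      refine ⟨fun x hx => hx.1, fun h => ?_⟩
      exact (h hb).2 le_rfl
    have hunion : D = D₁ ∪ D₂ := by
      ext x
      constructor
      · intro hx
        by_cases h1 : a ≤ x
        · by_cases h2 : b ≤ x
          · exact absurd h2 (hab x hx h1)
          · exact Or.inr ⟨hx, h2⟩
        · exact Or.inl ⟨hx, h1⟩
      · rintro (hx | hx) <;> exact hx.1
    obtain ⟨S₁, hS₁, hU₁⟩ := ih D₁ ⟨hdc₁, hss₁⟩ hdc₁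
    obtain ⟨S₂, hS₂, hU₂⟩ := ih D₂ ⟨hdc₂, hss₂⟩ hdc₂
    refine ⟨S₁ ∪ S₂, ?_, ?_⟩
    · intro I hI
      rcases Finset.mem_union.1 hI with h | h
      · exact ⟨(hS₁ I h).1, (hS₁ I h).2.trans hss₁.subset⟩
      · exact ⟨(hS₂ I h).1, (hS₂ I h).2.trans hss₂.subset⟩
    · rw [hunion, hU₁, hU₂]
      simp [Set.sUnion_union]

end Aux

/-- For a downwards-closed subset `D` of a wqo, the ideal decomposition of `D`
is finite and its union is `D`. -/
theorem idealDecomp_finite_and_union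
    {X : Type*} [Preorder X] (hX : IsWqo X)
    (D : Set X) (hD : DownwardsClosed D) :
    (idealDecomp D).Finite ∧ D = ⋃₀ idealDecomp D := by
  classical
  obtain ⟨S, hS, hU⟩ := exists_finite_ideal_decomp hX D hD
  have hSdc : ∀ A ∈ S, DownwardsClosed A := fun A hA => (hS A hA).1.2.1
  -- every ideal contained in D is contained in a member of S
  have key : ∀ I : Set X, IsIdeal I → I ⊆ D → ∃ A ∈ S, I ⊆ A := by
    intro I hI hID
    exact ideal_subset_of_subset_union hI S hSdc (by rwa [← hU])
  constructor
  · apply Set.Finite.subset S.finite_toSet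
    intro I hI
    obtain ⟨hIideal, hID, hmax⟩ := hI
    obtain ⟨A, hAS, hIA⟩ := key I hIideal hID
    have := hmax A (hS A hAS).1 (hS A hAS).2 hIA
    rw [this]
    exact hAS
  · apply Set.Subset.antisymm
    · intro x hx
      rw [hU] at hx
      obtain ⟨I₀, hI₀S, hxI₀⟩ := hx
      have hI₀S' : I₀ ∈ S := hI₀S
      -- find maximal element of S above I₀
      set T : Set (Set X) := {J | J ∈ S ∧ I₀ ⊆ J} with hT
      have hTfin : T.Finite := S.finite_toSet.subset (fun J hJ => hJ.1)
      have hTne : T.Nonempty := ⟨I₀, hI₀S', le_refl _⟩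
      obtain ⟨J, hJT, hJmax⟩ := Set.Finite.exists_maximalFor id T hTfin hTne
      refine ⟨J, ⟨(hS J hJT.1).1, (hS J hJT.1).2, ?_⟩, hJT.2 hxI₀⟩
      intro K hK hKD hJK
      obtain ⟨M, hMS, hKM⟩ := key K hK hKD
      have hJM : J ⊆ M := hJK.trans hKM
      have hMT : M ∈ T := ⟨hMS, hJT.2.trans hJM⟩
      have : J = M := Set.Subset.antisymm hJM (hJmax hMT hJM)
      exact Set.Subset.antisymm hJK (hKM.trans_eq this.symm)
    · intro x hx
      obtain ⟨I, hI, hxI⟩ := hx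
      exact hI.2.1 hxI
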